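/- Let γ : [a, b] → EuclideanSpace ℝ (Fin 2) (a < b) be a continuously differentiable unit-speed curve with A = γ(a) ≠ γ(b) = B. Then the total rotation of γ is at least angle(γ'(a), B − A) + angle(γ'(b), B − A), where angle(u, v) is the undirected angle between the nonzero vectors u and v. -/

import Mathlib

open Real ENNReal InnerProductGeometry

/-- The total rotation of a curve on `[a, b]` with velocity field `g`: the supremum, over all
finite partitions `a = t₀ < t₁ < … < t_N = b`, of the sums of undirected angles between
consecutive velocities, taken in `[0, ∞]`. -/
noncomputable def totalRotation (g : ℝ → EuclideanSpace ℝ (Fin 2)) (a b : ℝ) : ℝ≥0∞ :=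
  sSup {v : ℝ≥0∞ | ∃ (N : ℕ) (t : ℕ → ℝ), t 0 = a ∧ t N = b ∧ (∀ i < N, t i < t (i + 1)) ∧
    v = ∑ i ∈ Finset.range N,
      ENNReal.ofReal (InnerProductGeometry.angle (g (t i)) (g (t (i + 1))))}

namespace NP


lemma part_mono {N : ℕ} {t : ℕ → ℝ} (h : ∀ i < N, t i < t (i + 1)) :
    ∀ j ≤ N, ∀ i ≤ j, t i ≤ t j := by
  intro j hj
  induction j with
  | zero => intro i hi; simp [Nat.le_zero.mp hi]
  | succ n ih =>
    intro i hi
    rcases Nat.lt_or_ge i (n+1) with h1 | h1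
    · exact le_trans (ih (le_trans (Nat.le_succ n) hj) i (Nat.lt_succ_iff.mp h1))
        (le_of_lt (h n (Nat.lt_of_succ_le hj)))
    · have : i = n + 1 := le_antisymm hi h1
      simp [this]

lemma totalRotation_self (g : ℝ → EuclideanSpace ℝ (Fin 2)) (a : ℝ) :
    totalRotation g a a = 0 := by
  refine le_antisymm (sSup_le ?_) (zero_le)
  rintro v ⟨N, t, h0, hN, hmono, rfl⟩
  rcases Nat.eq_zero_or_pos N with rfl | hN'
  · simp
  · exfalso
    have h1 : t 0 ≤ t (N - 1) := part_mono hmono (N-1) (Nat.sub_le N 1) 0 (Nat.zero_le _)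
    have h2 : t (N - 1) < t N := by
      have := hmono (N-1) (by omega)
      rwa [Nat.sub_add_cancel hN'] at this
    rw [h0, hN] at *
    linarith
  
lemma single_le (g : ℝ → EuclideanSpace ℝ (Fin 2)) {a b : ℝ} (hab : a ≤ b) (hga : g a ≠ 0) :
    ENNReal.ofReal (angle (g a) (g b)) ≤ totalRotation g a b := by
  rcases eq_or_lt_of_le hab with rfl | hab
  · rw [angle_self hga]
    simp
  · apply le_sSup
    refine ⟨1, fun i => if i = 0 then a else b, by simp, by simp, ?_, by simp⟩
    intro i hi
    interval_cases i
    simp [hab]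

lemma concat_le (g : ℝ → EuclideanSpace ℝ (Fin 2)) {a c b : ℝ} (hac : a ≤ c) (hcb : c ≤ b) :
    totalRotation g a c + totalRotation g c b ≤ totalRotation g a b := by
  rcases eq_or_lt_of_le hac with rfl | hac
  · rw [totalRotation_self, zero_add]
  rcases eq_or_lt_of_le hcb with rfl | hcb
  · rw [totalRotation_self, add_zero]
  -- both strict now
  have hkey : ∀ v₁ ∈ {v : ℝ≥0∞ | ∃ (N : ℕ) (t : ℕ → ℝ), t 0 = a ∧ t N = c ∧
      (∀ i < N, t i < t (i + 1)) ∧ v = ∑ i ∈ Finset.range N,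
        ENNReal.ofReal (angle (g (t i)) (g (t (i + 1))))},
      ∀ v₂ ∈ {v : ℝ≥0∞ | ∃ (N : ℕ) (t : ℕ → ℝ), t 0 = c ∧ t N = b ∧
      (∀ i < N, t i < t (i + 1)) ∧ v = ∑ i ∈ Finset.range N,
        ENNReal.ofReal (angle (g (t i)) (g (t (i + 1))))},
      v₁ + v₂ ∈ {v : ℝ≥0∞ | ∃ (N : ℕ) (t : ℕ → ℝ), t 0 = a ∧ t N = b ∧
      (∀ i < N, t i < t (i + 1)) ∧ v = ∑ i ∈ Finset.range N,
        ENNReal.ofReal (angle (g (t i)) (g (t (i + 1))))} := by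
    rintro v₁ ⟨N₁, t, ht0, htN, htm, rfl⟩ v₂ ⟨N₂, u, hu0, huN, hum, rfl⟩
    refine ⟨N₁ + N₂, fun i => if i ≤ N₁ then t i else u (i - N₁), by simp [ht0], ?_, ?_, ?_⟩
    · rcases Nat.eq_zero_or_pos N₂ with rfl | h2
      · simpa using htN.trans (hu0.symm.trans huN)
      · simp only [add_le_iff_nonpos_right, Nat.le_zero]
        rw [if_neg (by omega)]
        simpa using huN
    · intro i hi
      beta_reduce
      rcases Nat.lt_or_ge i N₁ with h1 | h1
      · rw [if_pos (by omega : i ≤ N₁), if_pos (by omega : i + 1 ≤ N₁)]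
        exact htm i h1
      rcases Nat.eq_or_lt_of_le h1 with rfl | h1'
      · rw [if_pos le_rfl, if_neg (by omega : ¬ N₁ + 1 ≤ N₁), htN, Nat.add_sub_cancel_left]
        have h2 : 0 < N₂ := by omega
        have := hum 0 h2
        rwa [hu0] at this
      · rw [if_neg (by omega : ¬ i ≤ N₁), if_neg (by omega : ¬ i + 1 ≤ N₁)]
        have : i - N₁ < N₂ := by omega
        have h3 := hum (i - N₁) this
        have e1 : i - N₁ + 1 = i + 1 - N₁ := by omega
        rwa [e1] at h3
    · have haux : ∀ j, (fun i => if i ≤ N₁ then t i else u (i - N₁)) (N₁ + j) = u j := by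
        intro j
        beta_reduce
        rcases Nat.eq_zero_or_pos j with rfl | hj
        · simp [htN, hu0.symm]
        · rw [if_neg (by omega : ¬ N₁ + j ≤ N₁), Nat.add_sub_cancel_left]
      rw [Finset.sum_range_add]
      congr 1
      · apply Finset.sum_congr rfl
        intro i hi
        simp only [Finset.mem_range] at hi
        beta_reduce
        rw [if_pos (by omega : i ≤ N₁), if_pos (by omega : i + 1 ≤ N₁)]
      · apply Finset.sum_congr rfl
        intro j hj
        rw [haux j, Nat.add_assoc, haux (j+1)]
  unfold totalRotation
  have hne1 : ({v : ℝ≥0∞ | ∃ (N : ℕ) (t : ℕ → ℝ), t 0 = a ∧ t N = c ∧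
      (∀ i < N, t i < t (i + 1)) ∧ v = ∑ i ∈ Finset.range N,
        ENNReal.ofReal (angle (g (t i)) (g (t (i + 1))))}).Nonempty := by
    refine ⟨_, 1, fun i => if i = 0 then a else c, by simp, by simp, ?_, rfl⟩
    intro i hi; interval_cases i; simp [hac]
  have hne2 : ({v : ℝ≥0∞ | ∃ (N : ℕ) (t : ℕ → ℝ), t 0 = c ∧ t N = b ∧
      (∀ i < N, t i < t (i + 1)) ∧ v = ∑ i ∈ Finset.range N,
        ENNReal.ofReal (angle (g (t i)) (g (t (i + 1))))}).Nonempty := by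
    refine ⟨_, 1, fun i => if i = 0 then c else b, by simp, by simp, ?_, rfl⟩
    intro i hi; interval_cases i; simp [hcb]
  rw [ENNReal.sSup_add hne1]
  refine iSup₂_le fun v₁ hv₁ => ?_
  rw [ENNReal.add_sSup hne2]
  refine iSup₂_le fun v₂ hv₂ => ?_
  exact le_sSup (hkey v₁ hv₁ v₂ hv₂)


-- step: extend a lift from [a,s] to [a,s+h]
lemma lift_step {a b s h : ℝ} (z : ℝ → ℂ)
    (hz : ContinuousOn z (Set.Icc a b)) (hone : ∀ t ∈ Set.Icc a b, ‖z t‖ = 1)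
    (has : a ≤ s) (hh : 0 ≤ h) (hsb : s + h ≤ b)
    (hsmall : ∀ t ∈ Set.Icc s (s + h), ‖z t - z s‖ < 1)
    (θ : ℝ → ℝ) (hθc : ContinuousOn θ (Set.Icc a s))
    (hθl : ∀ t ∈ Set.Icc a s, z t = Complex.exp (θ t * Complex.I)) :
    ∃ θ' : ℝ → ℝ, ContinuousOn θ' (Set.Icc a (s + h)) ∧
      ∀ t ∈ Set.Icc a (s + h), z t = Complex.exp (θ' t * Complex.I) := by
  have hsmem : s ∈ Set.Icc a b := ⟨has, by linarith⟩
  have hzs : z s ≠ 0 := by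
    intro h0
    have := hone s hsmem
    rw [h0] at this; simp at this
  set ρ : ℝ → ℝ := fun t => max (min t (s + h)) s with hρ
  have hρmem : ∀ t, ρ t ∈ Set.Icc s (s + h) := by
    intro t
    constructor
    · exact le_max_right _ _
    · exact max_le (min_le_right _ _) (by linarith)
  have hρIcc : ∀ t, ρ t ∈ Set.Icc a b := fun t =>
    ⟨le_trans has (hρmem t).1, le_trans (hρmem t).2 hsb⟩
  refine ⟨fun t => θ (min t s) + (z (ρ t) / z s).arg, ?_, ?_⟩
  · apply ContinuousOn.add
    · apply hθc.comp (Continuous.continuousOn (by continuity))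
      intro t ht
      exact ⟨le_min ht.1 has, min_le_right _ _⟩
    · have hg : ContinuousOn (fun t => z (ρ t) / z s) (Set.Icc a (s + h)) := by
        apply ContinuousOn.div_const
        apply hz.comp (Continuous.continuousOn (by continuity))
        intro t _; exact hρIcc t
      intro t ht
      show ContinuousWithinAt (Complex.arg ∘ fun t => z (ρ t) / z s) (Set.Icc a (s+h)) t
      apply ContinuousAt.comp_continuousWithinAt _ (hg t ht)
      apply Complex.continuousAt_arg
      rw [Complex.mem_slitPlane_iff]
      -- z (ρ t) / z s is in the slit plane since |w - 1| < 1
      have h1 : ‖z (ρ t) / z s - 1‖ < 1 := by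
        have := hsmall (ρ t) (hρmem t)
        calc ‖z (ρ t) / z s - 1‖ = ‖z (ρ t) - z s‖ / ‖z s‖ := by
              rw [← norm_div]; congr 1; field_simp
          _ < 1 := by rw [hone s hsmem]; simpa using this
      set w := z (ρ t) / z s
      have h3 : |(w - 1).re| < 1 :=
        lt_of_le_of_lt (Complex.abs_re_le_norm (w - 1)) h1
      have h4 : (w - 1).re = w.re - 1 := by simp
      have h5 : (w - 1).re > -1 := (abs_lt.mp h3).1
      left
      linarith
  · intro t ht
    beta_reduce
    rcases le_total t s with hts | hts
    · have e1 : min t s = t := min_eq_left hts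
      have e2 : ρ t = s := by
        rw [hρ]; simp only
        rw [min_eq_left (by linarith : t ≤ s + h), max_eq_right hts]
      rw [e1, e2, div_self hzs, Complex.arg_one, add_zero]
      exact hθl t ⟨ht.1, hts⟩
    · have e1 : min t s = s := min_eq_right hts
      have e2 : ρ t = t := by
        rw [hρ]; simp only
        rw [min_eq_left ht.2, max_eq_left hts]
      rw [e1, e2]
      have habs : ‖z t / z s‖ = 1 := by
        rw [norm_div, hone t ⟨le_trans has hts, le_trans ht.2 hsb⟩, hone s hsmem, div_one]
      have harg : Complex.exp ((z t / z s).arg * Complex.I) = z t / z s := by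
        conv_rhs => rw [← Complex.norm_mul_exp_arg_mul_I (z t / z s)]
        rw [habs]; simp
      have : ((θ s + (z t / z s).arg : ℝ) : ℂ) * Complex.I
          = (θ s : ℂ) * Complex.I + ((z t / z s).arg : ℂ) * Complex.I := by
        push_cast; ring
      rw [this, Complex.exp_add, harg, ← hθl s ⟨has, le_refl s⟩]
      field_simp

lemma exists_lift {a b : ℝ} (hab : a ≤ b) (z : ℝ → ℂ)
    (hz : ContinuousOn z (Set.Icc a b)) (hone : ∀ t ∈ Set.Icc a b, ‖z t‖ = 1) :
    ∃ θ : ℝ → ℝ, ContinuousOn θ (Set.Icc a b) ∧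
      ∀ t ∈ Set.Icc a b, z t = Complex.exp (θ t * Complex.I) := by
  -- uniform continuity
  have huc := (isCompact_Icc : IsCompact (Set.Icc a b)).uniformContinuousOn_of_continuous hz
  rw [Metric.uniformContinuousOn_iff] at huc
  obtain ⟨δ, hδ, hucd⟩ := huc 1 one_pos
  obtain ⟨n', hn'⟩ := exists_nat_gt ((b - a) / δ)
  set n : ℕ := n' + 1 with hn
  have hnpos : 0 < (n : ℝ) := by positivity
  set h : ℝ := (b - a) / n with hh
  have hhnn : 0 ≤ h := by
    apply div_nonneg (by linarith) (le_of_lt hnpos)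
  have hsmalld : h < δ := by
    rw [hh, div_lt_iff₀ hnpos]
    have h2 : (b - a) / δ < n := by
      calc (b-a)/δ < n' := hn'
        _ ≤ n := by exact_mod_cast Nat.le_succ n'
    calc b - a < n * δ := (div_lt_iff₀ hδ).mp h2
      _ = δ * n := mul_comm _ _
  have key : ∀ k : ℕ, k ≤ n → ∃ θ : ℝ → ℝ, ContinuousOn θ (Set.Icc a (a + k * h)) ∧
      ∀ t ∈ Set.Icc a (a + k * h), z t = Complex.exp (θ t * Complex.I) := by
    intro k
    induction k with
    | zero =>
      intro _
      refine ⟨fun _ => (z a).arg, continuousOn_const, ?_⟩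
      intro t ht
      simp only [Nat.cast_zero, zero_mul, add_zero] at ht
      have : t = a := le_antisymm ht.2 ht.1
      subst this
      conv_lhs => rw [← Complex.norm_mul_exp_arg_mul_I (z t)]
      rw [hone t ⟨le_refl t, hab⟩]; simp
    | succ k ih =>
      intro hk
      obtain ⟨θ, hθc, hθl⟩ := ih (le_trans (Nat.le_succ k) hk)
      have hs : a + (k : ℝ) * h + h = a + ((k + 1 : ℕ) : ℝ) * h := by push_cast; ring
      have hha : a ≤ a + (k : ℝ) * h := by
        have : 0 ≤ (k : ℝ) * h := by positivity
        linarith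
      have hsb : a + (k : ℝ) * h + h ≤ b := by
        rw [hs]
        have : ((k + 1 : ℕ) : ℝ) ≤ n := by exact_mod_cast hk
        calc a + ((k + 1 : ℕ) : ℝ) * h ≤ a + n * h := by nlinarith
          _ = a + (b - a) := by rw [hh]; field_simp
          _ = b := by ring
      have hsmall : ∀ t ∈ Set.Icc (a + (k:ℝ) * h) (a + (k:ℝ) * h + h),
          ‖z t - z (a + (k:ℝ)*h)‖ < 1 := by
        intro t ht
        have htb : t ∈ Set.Icc a b := ⟨le_trans hha ht.1, le_trans ht.2 hsb⟩
        have hsmem : a + (k:ℝ)*h ∈ Set.Icc a b := ⟨hha, by linarith⟩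
        have hd : dist t (a + (k:ℝ)*h) < δ := by
          rw [Real.dist_eq]
          rw [abs_lt]
          constructor <;> [linarith [ht.1]; linarith [ht.2, hsmalld]]
        have := hucd t htb (a + (k:ℝ)*h) hsmem hd
        rwa [Complex.dist_eq] at this
      obtain ⟨θ', hc', hl'⟩ := lift_step z hz hone hha hhnn hsb hsmall θ hθc hθl
      rw [hs] at hc' hl'
      exact ⟨θ', hc', hl'⟩
  obtain ⟨θ, hc, hl⟩ := key n le_rfl
  have : a + (n:ℝ) * h = b := by rw [hh]; field_simp; ring
  rw [this] at hc hl
  exact ⟨θ, hc, hl⟩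

local notation "dd" x => Real.arccos (Real.cos x)

lemma dd_shift (x : ℝ) (k : ℤ) : Real.arccos (Real.cos (x - 2*π*k)) = Real.arccos (Real.cos x) := by
  rw [show x - 2*π*k = x - k * (2*π) by ring, Real.cos_sub_int_mul_two_pi]

lemma dd_neg (x : ℝ) : Real.arccos (Real.cos (-x)) = Real.arccos (Real.cos x) := by
  rw [Real.cos_neg]

lemma dd_min {x : ℝ} (h0 : 0 ≤ x) (h2 : x ≤ 2*π) :
    Real.arccos (Real.cos x) = min x (2*π - x) := by
  rcases le_total x π with h | h
  · rw [Real.arccos_cos h0 h, min_eq_left (by linarith)]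
  · rw [show Real.cos x = Real.cos (2*π - x) by rw [Real.cos_two_pi_sub],
      Real.arccos_cos (by linarith) (by linarith), min_eq_right (by linarith)]

lemma dd_min_shift (x : ℝ) (k : ℤ) {s : ℝ} (hs : s = 2*π*k) (h0 : 0 ≤ x - s)
    (h2 : x - s ≤ 2*π) :
    Real.arccos (Real.cos x) = min (x - s) (2*π - (x - s)) := by
  have h1 : Real.cos (x - s) = Real.cos x := by
    rw [hs, show x - 2*π*(k:ℝ) = x - (k:ℝ)*(2*π) by ring]
    exact Real.cos_sub_int_mul_two_pi x k
  rw [← h1]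
  exact dd_min h0 h2

lemma minarith1 {u v m' M' : ℝ} (h1 : 0 < m') (h2 : M' < 2*π)
    (h3 : m' ≤ u) (h4 : u ≤ M') (h5 : m' ≤ v) (h6 : v ≤ M') (h7 : π < M' - m') :
    min u (2*π - u) + min v (2*π - v) ≤
      min (u - m') (2*π - (u - m')) + (M' - m') + min (M' - v) (2*π - (M' - v)) := by
  have l1 := min_le_left u (2*π - u)
  have l2 := min_le_right u (2*π - u)
  have l3 := min_le_left v (2*π - v)
  have l4 := min_le_right v (2*π - v)
  rcases min_cases (u - m') (2*π - (u - m')) with ⟨e1, _⟩ | ⟨e1, _⟩ <;>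
    rcases min_cases (M' - v) (2*π - (M' - v)) with ⟨e2, _⟩ | ⟨e2, _⟩ <;>
    rw [e1, e2] <;> linarith

lemma minarith2 {u v m' M' : ℝ} (h1 : 0 < m') (h2 : M' < 2*π)
    (h3 : m' ≤ u) (h4 : u ≤ M') (h5 : m' ≤ v) (h6 : v ≤ M') (h7 : π < M' - m') :
    min u (2*π - u) + min v (2*π - v) ≤
      min (M' - u) (2*π - (M' - u)) + (M' - m') + min (v - m') (2*π - (v - m')) := by
  have l1 := min_le_left u (2*π - u)
  have l2 := min_le_right u (2*π - u)
  have l3 := min_le_left v (2*π - v)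
  have l4 := min_le_right v (2*π - v)
  rcases min_cases (M' - u) (2*π - (M' - u)) with ⟨e1, _⟩ | ⟨e1, _⟩ <;>
    rcases min_cases (v - m') (2*π - (v - m')) with ⟨e2, _⟩ | ⟨e2, _⟩ <;>
    rw [e1, e2] <;> linarith

lemma core {a b : ℝ} (hab : a < b) (θ : ℝ → ℝ) (hθ : ContinuousOn θ (Set.Icc a b))
    (hcos : 0 < ∫ t in a..b, Real.cos (θ t)) (hsin : (∫ t in a..b, Real.sin (θ t)) = 0) :
    ∃ s₁ s₂ s₃, a ≤ s₁ ∧ s₁ ≤ s₂ ∧ s₂ ≤ s₃ ∧ s₃ ≤ b ∧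
      Real.arccos (Real.cos (θ a)) + Real.arccos (Real.cos (θ b)) ≤
        Real.arccos (Real.cos (θ s₁ - θ a)) + Real.arccos (Real.cos (θ s₂ - θ s₁)) +
          Real.arccos (Real.cos (θ s₃ - θ s₂)) + Real.arccos (Real.cos (θ b - θ s₃)) := by
  have hab' : a ≤ b := hab.le
  have hane : (Set.Icc a b).Nonempty := ⟨a, Set.left_mem_Icc.mpr hab'⟩
  obtain ⟨tm, htm, hmin⟩ := isCompact_Icc.exists_isMinOn hane hθ
  obtain ⟨tM, htM, hmax⟩ := isCompact_Icc.exists_isMaxOn hane hθ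
  rw [isMinOn_iff] at hmin
  rw [isMaxOn_iff] at hmax
  set m := θ tm with hm
  set M := θ tM with hM
  have ha' : a ∈ Set.Icc a b := Set.left_mem_Icc.mpr hab'
  have hb' : b ∈ Set.Icc a b := Set.right_mem_Icc.mpr hab'
  have hmM : m ≤ M := hmin tM htM
  have huIcc : Set.uIcc tm tM ⊆ Set.Icc a b := Set.ordConnected_Icc.uIcc_subset htm htM
  have hIVT := intermediate_value_uIcc (hθ.mono huIcc)
  have pi_pos := Real.pi_pos
  set j : ℤ := ⌈m / (2*π)⌉ with hj
  rcases le_or_gt (2*π*j) M with hA | hB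
  · -- Case A : some multiple of 2π is in the range
    have hmj : m ≤ 2*π*j := by
      have := Int.le_ceil (m / (2*π))
      calc m = (m / (2*π)) * (2*π) := by field_simp
        _ ≤ j * (2*π) := by nlinarith [this]
        _ = 2*π*j := by ring
    have : (2*π*j : ℝ) ∈ Set.uIcc m M := by
      rw [Set.uIcc_of_le hmM]; exact ⟨hmj, hA⟩
    obtain ⟨p, hp, hpθ⟩ := hIVT this
    have hpmem := huIcc hp
    refine ⟨p, p, p, hpmem.1, le_refl p, le_refl p, hpmem.2, ?_⟩
    have e1 : Real.arccos (Real.cos (θ p - θ a)) = Real.arccos (Real.cos (θ a)) := by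
      rw [hpθ, show 2*π*(j:ℝ) - θ a = -(θ a - 2*π*j) by ring, dd_neg, dd_shift]
    have e2 : Real.arccos (Real.cos (θ b - θ p)) = Real.arccos (Real.cos (θ b)) := by
      rw [hpθ, show θ b - 2*π*(j:ℝ) = θ b - 2*π*j by ring, dd_shift]
    rw [e1, e2]
    simp [sub_self, Real.arccos_one]
  · -- Case B : range avoids multiples of 2π
    set σ : ℝ := 2*π*(j-1) with hσ
    have hσm : σ < m := by
      have := Int.ceil_lt_add_one (m / (2*π))
      have h2 : ((j:ℝ) - 1) < m / (2*π) := by push_cast; linarith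
      calc σ = ((j:ℝ) - 1) * (2*π) := by rw [hσ]; push_cast; ring
        _ < (m / (2*π)) * (2*π) := by nlinarith
        _ = m := by field_simp
    have hMσ : M < σ + 2*π := by
      rw [hσ]; push_cast; nlinarith [hB]
    set m' := m - σ with hm'
    set M' := M - σ with hM'
    have hm'pos : 0 < m' := by simp [hm']; linarith
    have hM'lt : M' < 2*π := by simp [hM']; linarith
    have hm'M' : m' ≤ M' := by simp [hm', hM']; linarith
    -- claim : M' - m' > π
    have hδ : π < M' - m' := by
      by_contra hle
      push_neg at hle
      set c : ℝ := (m' + M')/2 + σ with hc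
      set δ : ℝ := M' - m' with hδ2
      have hδnn : 0 ≤ δ := by simp [hδ2]; linarith
      -- integral identities
      have i1 : IntervalIntegrable (fun t => Real.cos (θ t)) MeasureTheory.volume a b :=
        (Real.continuous_cos.comp_continuousOn hθ).intervalIntegrable_of_Icc hab'
      have i2 : IntervalIntegrable (fun t => Real.sin (θ t)) MeasureTheory.volume a b :=
        (Real.continuous_sin.comp_continuousOn hθ).intervalIntegrable_of_Icc hab'
      have key : (∫ t in a..b, Real.cos (θ t - c)) =
          Real.cos c * ∫ t in a..b, Real.cos (θ t) := by
        have : ∀ t, Real.cos (θ t - c) = Real.cos (θ t) * Real.cos c + Real.sin (θ t) * Real.sin c := by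
          intro t; rw [Real.cos_sub]
        rw [intervalIntegral.integral_congr (fun t _ => this t)]
        rw [intervalIntegral.integral_add (i1.mul_const _) (i2.mul_const _),
          intervalIntegral.integral_mul_const, intervalIntegral.integral_mul_const, hsin]
        ring
      -- pointwise lower bound
      have hpt : ∀ t ∈ Set.Icc a b, Real.cos (δ/2) ≤ Real.cos (θ t - c) := by
        intro t ht
        have h1 : m ≤ θ t := hmin t ht
        have h2 : θ t ≤ M := hmax t ht
        have habs : |θ t - c| ≤ δ/2 := by
          rw [abs_le]
          constructor <;> simp only [hc, hδ2, hm', hM'] <;> linarith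
        calc Real.cos (δ/2) ≤ Real.cos |θ t - c| := by
              apply Real.cos_le_cos_of_nonneg_of_le_pi (abs_nonneg _) (by linarith) habs
          _ = Real.cos (θ t - c) := Real.cos_abs _
      -- integrate the bound
      have hmono : (b - a) * Real.cos (δ/2) ≤ ∫ t in a..b, Real.cos (θ t - c) := by
        have ic : IntervalIntegrable (fun _ : ℝ => Real.cos (δ/2)) MeasureTheory.volume a b :=
          intervalIntegrable_const
        have ig : IntervalIntegrable (fun t => Real.cos (θ t - c)) MeasureTheory.volume a b := by
          apply ContinuousOn.intervalIntegrable_of_Icc hab'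
          exact Real.continuous_cos.comp_continuousOn (hθ.sub continuousOn_const)
        have := intervalIntegral.integral_mono_on hab' ic ig hpt
        simpa using this
      have hL1 : (∫ t in a..b, Real.cos (θ t)) ≤ b - a := by
        have := intervalIntegral.integral_mono_on hab' i1 intervalIntegrable_const
          (fun t _ => Real.cos_le_one (θ t))
        simpa using this
      have hcδ : 0 ≤ Real.cos (δ/2) := by
        apply Real.cos_nonneg_of_mem_Icc
        constructor <;> [linarith; linarith]
      -- conclude cos c ≥ cos (δ/2)
      have hconc : Real.cos (δ/2) ≤ Real.cos c := by
        rw [key] at hmono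
        nlinarith [hmono, hL1, hcos, hcδ]
      -- now derive contradiction
      have hcc : Real.cos c = Real.cos ((m' + M')/2) := by
        rw [hc, hσ, show (m' + M')/2 + 2*π*((j:ℝ)-1) = (m' + M')/2 - 2*π*(-((j:ℝ)-1)) by ring]
        rw [show (2:ℝ)*π*(-((j:ℝ)-1)) = 2*π*((-(j-1) : ℤ) : ℝ) by push_cast; ring]
        rw [show (m' + M')/2 - 2*π*((-(j-1) : ℤ) : ℝ) = (m'+M')/2 - ((-(j-1) : ℤ) : ℝ) * (2*π) by ring]
        rw [Real.cos_sub_int_mul_two_pi]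
      set c' : ℝ := (m' + M')/2 with hc'
      rw [hcc] at hconc
      have hc'mem : m' ≤ c' ∧ c' ≤ M' := by constructor <;> (rw [hc']; linarith)
      rcases le_total c' π with hcπ | hcπ
      · have : c' ≤ δ/2 := by
          by_contra hgt
          push_neg at hgt
          have := Real.strictAntiOn_cos ⟨by linarith, by linarith⟩
            (Set.mem_Icc.mpr ⟨by linarith, hcπ⟩) hgt
          linarith
        rw [hc'] at this; rw [hδ2] at this; linarith
      · have h2πc : Real.cos c' = Real.cos (2*π - c') := (Real.cos_two_pi_sub c').symm
        rw [h2πc] at hconc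
        have : 2*π - c' ≤ δ/2 := by
          by_contra hgt
          push_neg at hgt
          have := Real.strictAntiOn_cos ⟨by linarith, by linarith⟩
            (Set.mem_Icc.mpr ⟨by linarith, by linarith⟩) hgt
          linarith
        rw [hc'] at this; rw [hδ2] at this; linarith
    -- now M' - m' > π ; pick q with θ q = (m'+M')/2 + σ
    set c : ℝ := (m' + M')/2 + σ with hc
    have hcmem : c ∈ Set.uIcc m M := by
      rw [Set.uIcc_of_le hmM]
      constructor <;> (simp only [hc, hm', hM']; linarith)
    obtain ⟨q, hq, hqθ⟩ := hIVT hcmem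
    have hqmem := huIcc hq
    have hu1 : m ≤ θ a := hmin a ha'
    have hu2 : θ a ≤ M := hmax a ha'
    have hv1 : m ≤ θ b := hmin b hb'
    have hv2 : θ b ≤ M := hmax b hb'
    -- rewrite the target angles
    have hjcast : σ = 2*π*((j - 1 : ℤ) : ℝ) := by rw [hσ]; push_cast; ring
    have ea : Real.arccos (Real.cos (θ a)) = min (θ a - σ) (2*π - (θ a - σ)) :=
      dd_min_shift (θ a) (j-1) hjcast (by linarith) (by linarith)
    have eb : Real.arccos (Real.cos (θ b)) = min (θ b - σ) (2*π - (θ b - σ)) :=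
      dd_min_shift (θ b) (j-1) hjcast (by linarith) (by linarith)
    have hhalf0 : 0 ≤ (M' - m')/2 := by linarith
    have hhalfπ : (M' - m')/2 ≤ π := by linarith
    rcases le_total tm tM with hord | hord
    · obtain ⟨hq1, hq2⟩ : tm ≤ q ∧ q ≤ tM := by
        have := hq; rwa [Set.uIcc_of_le hord, Set.mem_Icc] at this
      refine ⟨tm, q, tM, htm.1, hq1, hq2, htM.2, ?_⟩
      have e1 : Real.arccos (Real.cos (θ tm - θ a))
          = min ((θ a - σ) - m') (2*π - ((θ a - σ) - m')) := by
        rw [show θ tm - θ a = -((θ a - σ) - m') by rw [hm']; simp only [← hm]; ring, dd_neg]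
        apply dd_min <;> linarith
      have e2 : Real.arccos (Real.cos (θ q - θ tm)) = (M' - m')/2 := by
        rw [hqθ, show c - θ tm = (M' - m')/2 by rw [hc, hm', hM']; simp only [← hm]; ring]
        exact Real.arccos_cos hhalf0 hhalfπ
      have e3 : Real.arccos (Real.cos (θ tM - θ q)) = (M' - m')/2 := by
        rw [hqθ, show θ tM - c = (M' - m')/2 by rw [hc, hm', hM']; simp only [← hM]; ring]
        exact Real.arccos_cos hhalf0 hhalfπ
      have e4 : Real.arccos (Real.cos (θ b - θ tM))
          = min (M' - (θ b - σ)) (2*π - (M' - (θ b - σ))) := by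
        rw [show θ b - θ tM = -(M' - (θ b - σ)) by rw [hM']; simp only [← hM]; ring, dd_neg]
        apply dd_min <;> linarith
      rw [ea, eb, e1, e2, e3, e4]
      have := minarith1 (u := θ a - σ) (v := θ b - σ) (m' := m') (M' := M')
        hm'pos hM'lt (by linarith) (by linarith) (by linarith) (by linarith) hδ
      linarith
    · obtain ⟨hq1, hq2⟩ : tM ≤ q ∧ q ≤ tm := by
        have := hq; rwa [Set.uIcc_comm, Set.uIcc_of_le hord, Set.mem_Icc] at this
      refine ⟨tM, q, tm, htM.1, hq1, hq2, htm.2, ?_⟩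
      have e1 : Real.arccos (Real.cos (θ tM - θ a))
          = min (M' - (θ a - σ)) (2*π - (M' - (θ a - σ))) := by
        rw [show θ tM - θ a = M' - (θ a - σ) by rw [hM']; simp only [← hM]; ring]
        apply dd_min <;> linarith
      have e2 : Real.arccos (Real.cos (θ q - θ tM)) = (M' - m')/2 := by
        rw [hqθ, show c - θ tM = -((M' - m')/2) by rw [hc, hm', hM']; simp only [← hM]; ring,
          dd_neg]
        exact Real.arccos_cos hhalf0 hhalfπ
      have e3 : Real.arccos (Real.cos (θ tm - θ q)) = (M' - m')/2 := by
        rw [hqθ, show θ tm - c = -((M' - m')/2) by rw [hc, hm', hM']; simp only [← hm]; ring,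
          dd_neg]
        exact Real.arccos_cos hhalf0 hhalfπ
      have e4 : Real.arccos (Real.cos (θ b - θ tm))
          = min ((θ b - σ) - m') (2*π - ((θ b - σ) - m')) := by
        rw [show θ b - θ tm = (θ b - σ) - m' by rw [hm']; simp only [← hm]; ring]
        apply dd_min <;> linarith
      rw [ea, eb, e1, e2, e3, e4]
      have := minarith2 (u := θ a - σ) (v := θ b - σ) (m' := m') (M' := M')
        hm'pos hM'lt (by linarith) (by linarith) (by linarith) (by linarith) hδ
      linarith


end NP

/-- **Lemma 1** of Nazarov–Petrov: for a `C¹` unit-speed curve `γ` on `[a, b]` with endpoints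
`A = γ(a) ≠ γ(b) = B`, the total rotation of `γ` is at least
`angle(γ'(a), B − A) + angle(γ'(b), B − A)`. -/
theorem rotation_ge_endpoint_angles (a b : ℝ) (hab : a < b)
    (γ γ' : ℝ → EuclideanSpace ℝ (Fin 2))
    (hderiv : ∀ t ∈ Set.Icc a b, HasDerivWithinAt γ (γ' t) (Set.Icc a b) t)
    (hcont : ContinuousOn γ' (Set.Icc a b))
    (hunit : ∀ t ∈ Set.Icc a b, ‖γ' t‖ = 1)
    (hne : γ a ≠ γ b) :
    ENNReal.ofReal
        (InnerProductGeometry.angle (γ' a) (γ b - γ a) +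
          InnerProductGeometry.angle (γ' b) (γ b - γ a)) ≤
      totalRotation γ' a b := by
  classical
  haveI : Fact (Module.finrank ℝ (EuclideanSpace ℝ (Fin 2)) = 2) := ⟨finrank_euclideanSpace_fin⟩
  set o : Orientation ℝ (EuclideanSpace ℝ (Fin 2)) (Fin 2) :=
    (EuclideanSpace.basisFun (Fin 2) ℝ).toBasis.orientation with ho
  set d : EuclideanSpace ℝ (Fin 2) := γ b - γ a with hdd
  have hd : d ≠ 0 := sub_ne_zero.mpr (Ne.symm hne)
  have hL : 0 < ‖d‖ := norm_pos_iff.mpr hd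
  set e : EuclideanSpace ℝ (Fin 2) := ‖d‖⁻¹ • d with hee
  have he : ‖e‖ = 1 := norm_smul_inv_norm hd
  have hde : d = ‖d‖ • e := by
    rw [hee, smul_smul, mul_inv_cancel₀ (ne_of_gt hL), one_smul]
  have ha' : a ∈ Set.Icc a b := Set.left_mem_Icc.mpr hab.le
  have hb' : b ∈ Set.Icc a b := Set.right_mem_Icc.mpr hab.le
  set z : ℝ → ℂ := fun t => o.kahler e (γ' t) with hz
  have hzc : ContinuousOn z (Set.Icc a b) :=
    (o.kahler e).continuous_of_finiteDimensional.comp_continuousOn hcont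
  have hone : ∀ t ∈ Set.Icc a b, ‖z t‖ = 1 := by
    intro t ht
    rw [hz]
    simp only
    rw [o.norm_kahler, he, hunit t ht, one_mul]
  obtain ⟨θ, hθc, hθl⟩ := NP.exists_lift hab.le z hzc hone
  -- pointwise identities
  have hre : ∀ t ∈ Set.Icc a b, inner ℝ e (γ' t) = Real.cos (θ t) := by
    intro t ht
    have h1 : (z t).re = inner ℝ e (γ' t) := by
      rw [hz]; simp [Orientation.kahler_apply_apply]
    have h2 : (z t).re = Real.cos (θ t) := by
      rw [hθl t ht, Complex.exp_ofReal_mul_I_re]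
    rw [← h1, h2]
  have him : ∀ t ∈ Set.Icc a b, (inner ℝ (o.rightAngleRotation e) (γ' t) : ℝ)
      = Real.sin (θ t) := by
    intro t ht
    have h1 : (z t).im = (inner ℝ (o.rightAngleRotation e) (γ' t) : ℝ) := by
      rw [hz]; simp [Orientation.kahler_apply_apply, o.inner_rightAngleRotation_left]
    have h2 : (z t).im = Real.sin (θ t) := by
      rw [hθl t ht, Complex.exp_ofReal_mul_I_im]
    rw [← h1, h2]
  have hangle : ∀ s ∈ Set.Icc a b, ∀ t ∈ Set.Icc a b,
      InnerProductGeometry.angle (γ' s) (γ' t) = Real.arccos (Real.cos (θ t - θ s)) := by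
    intro s hs t ht
    have h1 : o.kahler (γ' s) (γ' t) = (starRingEnd ℂ) (z s) * z t := by
      have h2 : o.kahler (γ' s) e * o.kahler e (γ' t) = ‖e‖^2 * o.kahler (γ' s) (γ' t) :=
        o.kahler_mul e (γ' s) (γ' t)
      rw [he] at h2
      rw [o.kahler_swap (γ' s) e] at h2
      simpa [hz] using h2.symm
    have h3 : (inner ℝ (γ' s) (γ' t) : ℝ) = Real.cos (θ t - θ s) := by
      have h4 : (inner ℝ (γ' s) (γ' t) : ℝ) = (o.kahler (γ' s) (γ' t)).re := by
        simp [Orientation.kahler_apply_apply]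
      rw [h4, h1, hθl s hs, hθl t ht, ← Complex.exp_conj]
      have h5 : (starRingEnd ℂ) ((θ s : ℂ) * Complex.I) = ((-(θ s) : ℝ) : ℂ) * Complex.I := by
        simp
      rw [h5, ← Complex.exp_add,
        show ((-(θ s) : ℝ) : ℂ) * Complex.I + (θ t : ℂ) * Complex.I
          = ((θ t - θ s : ℝ) : ℂ) * Complex.I by push_cast; ring,
        Complex.exp_ofReal_mul_I_re]
    rw [InnerProductGeometry.angle, h3, hunit s hs, hunit t ht, one_mul, div_one]
  -- FTC
  have hγc : ContinuousOn γ (Set.Icc a b) := fun t ht => (hderiv t ht).continuousWithinAt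
  have ftc : ∀ w : EuclideanSpace ℝ (Fin 2),
      (∫ t in a..b, (inner ℝ w (γ' t) : ℝ)) = inner ℝ w d := by
    intro w
    have hfd : ∀ t ∈ Set.Ioo a b,
        HasDerivWithinAt (fun u => (inner ℝ w (γ u) : ℝ)) (inner ℝ w (γ' t)) (Set.Ioi t) t := by
      intro t ht
      have h1 : HasDerivWithinAt (fun u => (inner ℝ w (γ u) : ℝ)) (inner ℝ w (γ' t))
          (Set.Icc a b) t := by
        exact (innerSL ℝ w).hasFDerivAt.comp_hasDerivWithinAt t
          (hderiv t ⟨ht.1.le, ht.2.le⟩)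
      exact h1.mono_of_mem_nhdsWithin (Icc_mem_nhdsGT_of_mem ⟨ht.1.le, ht.2⟩)
    have hci : ContinuousOn (fun u => (inner ℝ w (γ u) : ℝ)) (Set.Icc a b) :=
      (innerSL ℝ w).continuous.comp_continuousOn hγc
    have hii : IntervalIntegrable (fun t => (inner ℝ w (γ' t) : ℝ)) MeasureTheory.volume a b :=
      ((innerSL ℝ w).continuous.comp_continuousOn hcont).intervalIntegrable_of_Icc hab.le
    have := intervalIntegral.integral_eq_sub_of_hasDeriv_right_of_le hab.le hci hfd hii
    rw [this, hdd, inner_sub_right]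
  have hcosint : (0:ℝ) < ∫ t in a..b, Real.cos (θ t) := by
    have h1 : (∫ t in a..b, Real.cos (θ t)) = ∫ t in a..b, (inner ℝ e (γ' t) : ℝ) := by
      apply intervalIntegral.integral_congr
      intro t ht
      rw [Set.uIcc_of_le hab.le] at ht
      exact (hre t ht).symm
    rw [h1, ftc e, hee, real_inner_smul_left, real_inner_self_eq_norm_sq]
    have : ‖d‖⁻¹ * ‖d‖^2 = ‖d‖ := by field_simp
    rw [this]; exact hL
  have hsinint : (∫ t in a..b, Real.sin (θ t)) = 0 := by
    have h1 : (∫ t in a..b, Real.sin (θ t))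
        = ∫ t in a..b, (inner ℝ (o.rightAngleRotation e) (γ' t) : ℝ) := by
      apply intervalIntegral.integral_congr
      intro t ht
      rw [Set.uIcc_of_le hab.le] at ht
      exact (him t ht).symm
    rw [h1, ftc _, hde, real_inner_smul_right, o.inner_rightAngleRotation_self, mul_zero]
  -- apply the core lemma
  obtain ⟨s₁, s₂, s₃, hs1, hs2, hs3, hs4, hineq⟩ := NP.core hab θ hθc hcosint hsinint
  have hs₁ : s₁ ∈ Set.Icc a b := ⟨hs1, by linarith⟩
  have hs₂ : s₂ ∈ Set.Icc a b := ⟨by linarith, by linarith⟩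
  have hs₃ : s₃ ∈ Set.Icc a b := ⟨by linarith, hs4⟩
  -- goal angles
  have ga : InnerProductGeometry.angle (γ' a) d = Real.arccos (Real.cos (θ a)) := by
    rw [hde, angle_smul_right_of_pos _ _ hL, InnerProductGeometry.angle,
      hunit a ha', he, one_mul, div_one, real_inner_comm, hre a ha']
  have gb : InnerProductGeometry.angle (γ' b) d = Real.arccos (Real.cos (θ b)) := by
    rw [hde, angle_smul_right_of_pos _ _ hL, InnerProductGeometry.angle,
      hunit b hb', he, one_mul, div_one, real_inner_comm, hre b hb']
  have hne0 : ∀ t ∈ Set.Icc a b, γ' t ≠ 0 := by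
    intro t ht h0
    have := hunit t ht
    rw [h0] at this; simp at this
  -- chain of totalRotation bounds
  have step1 : ENNReal.ofReal (InnerProductGeometry.angle (γ' a) (γ' s₁))
      ≤ totalRotation γ' a s₁ := NP.single_le γ' hs1 (hne0 a ha')
  have step2 : ENNReal.ofReal (InnerProductGeometry.angle (γ' s₁) (γ' s₂))
      ≤ totalRotation γ' s₁ s₂ := NP.single_le γ' hs2 (hne0 s₁ hs₁)
  have step3 : ENNReal.ofReal (InnerProductGeometry.angle (γ' s₂) (γ' s₃))
      ≤ totalRotation γ' s₂ s₃ := NP.single_le γ' hs3 (hne0 s₂ hs₂)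
  have step4 : ENNReal.ofReal (InnerProductGeometry.angle (γ' s₃) (γ' b))
      ≤ totalRotation γ' s₃ b := NP.single_le γ' hs4 (hne0 s₃ hs₃)
  have concat : totalRotation γ' a s₁ + (totalRotation γ' s₁ s₂ +
      (totalRotation γ' s₂ s₃ + totalRotation γ' s₃ b)) ≤ totalRotation γ' a b := by
    calc totalRotation γ' a s₁ + (totalRotation γ' s₁ s₂ +
        (totalRotation γ' s₂ s₃ + totalRotation γ' s₃ b))
        ≤ totalRotation γ' a s₁ + (totalRotation γ' s₁ s₂ + totalRotation γ' s₂ b) := by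
          gcongr
          exact NP.concat_le γ' hs3 hs4
      _ ≤ totalRotation γ' a s₁ + totalRotation γ' s₁ b := by
          gcongr
          exact NP.concat_le γ' hs2 (by linarith)
      _ ≤ totalRotation γ' a b := NP.concat_le γ' hs1 (by linarith)
  -- final computation
  rw [ga, gb]
  calc ENNReal.ofReal (Real.arccos (Real.cos (θ a)) + Real.arccos (Real.cos (θ b)))
      ≤ ENNReal.ofReal (Real.arccos (Real.cos (θ s₁ - θ a)) +
          Real.arccos (Real.cos (θ s₂ - θ s₁)) + Real.arccos (Real.cos (θ s₃ - θ s₂)) +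
          Real.arccos (Real.cos (θ b - θ s₃))) := ENNReal.ofReal_le_ofReal hineq
    _ = ENNReal.ofReal (Real.arccos (Real.cos (θ s₁ - θ a))) +
        (ENNReal.ofReal (Real.arccos (Real.cos (θ s₂ - θ s₁))) +
        (ENNReal.ofReal (Real.arccos (Real.cos (θ s₃ - θ s₂))) +
        ENNReal.ofReal (Real.arccos (Real.cos (θ b - θ s₃))))) := by
        rw [ENNReal.ofReal_add (add_nonneg (add_nonneg (Real.arccos_nonneg _)
            (Real.arccos_nonneg _)) (Real.arccos_nonneg _)) (Real.arccos_nonneg _),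
          ENNReal.ofReal_add (add_nonneg (Real.arccos_nonneg _) (Real.arccos_nonneg _))
            (Real.arccos_nonneg _),
          ENNReal.ofReal_add (Real.arccos_nonneg _) (Real.arccos_nonneg _)]
        ring
    _ ≤ totalRotation γ' a s₁ + (totalRotation γ' s₁ s₂ +
        (totalRotation γ' s₂ s₃ + totalRotation γ' s₃ b)) := by
        rw [← hangle a ha' s₁ hs₁, ← hangle s₁ hs₁ s₂ hs₂, ← hangle s₂ hs₂ s₃ hs₃,
          ← hangle s₃ hs₃ b hb']
        gcongr
    _ ≤ totalRotation γ' a b := concat
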